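/- For all real k and δ ≥ 0, both roots λ of λ² + (k² + δk² + k⁴/3)λ + (1/12)k⁶ + (1/3)δk⁶ = 0 satisfy Re(λ) ≤ 0, with equality only when k = 0; hence the linearised model is stable for all wavenumbers. -/
import Mathlib


/-- For all real k and δ ≥ 0, both roots of the characteristic quadratic have
Re(λ) ≤ 0, with equality only when k = 0. -/
theorem stmt7 (k δ : ℝ) (hδ : 0 ≤ δ) (z : ℂ)
    (hz : z^2 + ((k^2 + δ*k^2 + k^4/3 : ℝ) : ℂ) * z
        + (((1/12)*k^6 + (1/3)*δ*k^6 : ℝ) : ℂ) = 0) :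
    z.re ≤ 0 ∧ (z.re = 0 → k = 0) := by
  set b : ℝ := k^2 + δ*k^2 + k^4/3 with hbdef
  set c : ℝ := (1/12)*k^6 + (1/3)*δ*k^6 with hcdef
  have hb : 0 ≤ b := by rw [hbdef]; positivity
  have hc : 0 ≤ c := by rw [hcdef]; positivity
  have hre := congrArg Complex.re hz
  have him := congrArg Complex.im hz
  simp [pow_two, Complex.add_re, Complex.add_im, Complex.mul_re, Complex.mul_im] at hre him
  have hbk : k ≠ 0 → 0 < b := fun hk => by rw [hbdef]; positivity
  have hck : k ≠ 0 → 0 < c := fun hk => by rw [hcdef]; positivity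
  have him' : z.im * (2*z.re + b) = 0 := by nlinarith [him]
  rcases mul_eq_zero.mp him' with hy | hxb
  · have hre' : z.re*z.re + b*z.re + c = 0 := by
      rw [hy] at hre; linarith [hre]
    have hx : z.re ≤ 0 := by nlinarith
    refine ⟨hx, fun hx0 => ?_⟩
    by_contra hk
    have := hck hk
    rw [hx0] at hre'
    nlinarith
  · have hx : z.re = -b/2 := by linear_combination hxb / 2
    constructor
    · rw [hx]; linarith
    · intro hx0
      by_contra hk
      have := hbk hk
      rw [hx] at hx0
      linarith
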